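/- arXiv:2105.02523 — 5 statements merged into one kernel-verified Lean document; each statement's English description precedes it below -/
import Mathlib

section
/- The functions a(y) = λ^{4/5}·6^{1/5}·y^{2/5} for 0 < y ≤ y_c and a(y) = (3λ²/2)^{1/3}·y^{2/3} for y > y_c, together with b(y) = 0 for y ≤ y_c and b(y) = (3/(16λ))^{2/3}·y^{4/3} − 1 for y > y_c, where y_c = 4·√(λ/3), are continuous on (0,∞) and continuously differentiable on (0,∞)\{y_c}, and for all y ≠ y_c they satisfy the system: −b(y) + (5/4)·y·b′(y) − a(y)·(b′(y))² + 𝟙_{y<y_c} = 1 and −(5/4)·y·a′(y) + (1/2)·a(y) − 2λ²·(b′(y))² + 2·a(y)·b′(y)·a′(y) = 0. -/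
open Real Set

private lemma aux_pow (x : ℝ) (hx : 0 ≤ x) (p : ℝ) (n : ℕ) :
    (x ^ p) ^ n = x ^ (p * n) := by
  rw [← Real.rpow_natCast (x ^ p) n, ← Real.rpow_mul hx]

private lemma aux_pow' (x : ℝ) (hx : 0 ≤ x) (p : ℝ) (n m : ℕ)
    (h : p * n = (m : ℝ)) : (x ^ p) ^ n = x ^ m := by
  rw [aux_pow x hx p n, h, Real.rpow_natCast]

theorem stmt_0 (lam : ℝ) (hlam : 0 < lam)
    (yc : ℝ) (hyc : yc = 4 * Real.sqrt (lam / 3))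
    (a b : ℝ → ℝ)
    (ha : ∀ y : ℝ, a y = if y ≤ yc then lam ^ ((4:ℝ)/5) * (6:ℝ) ^ ((1:ℝ)/5) * y ^ ((2:ℝ)/5)
        else (3 * lam ^ 2 / 2) ^ ((1:ℝ)/3) * y ^ ((2:ℝ)/3))
    (hb : ∀ y : ℝ, b y = if y ≤ yc then 0
        else (3 / (16 * lam)) ^ ((2:ℝ)/3) * y ^ ((4:ℝ)/3) - 1) :
    ContinuousOn a (Set.Ioi 0) ∧ ContinuousOn b (Set.Ioi 0) ∧
    ContDiffOn ℝ 1 a (Set.Ioi 0 \ {yc}) ∧ ContDiffOn ℝ 1 b (Set.Ioi 0 \ {yc}) ∧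
    ∀ y ∈ Set.Ioi (0:ℝ) \ {yc},
      (- b y + (5/4) * y * deriv b y - a y * (deriv b y) ^ 2
          + (if y < yc then (1:ℝ) else 0) = 1) ∧
      (- (5/4) * y * deriv a y + (1/2) * a y - 2 * lam ^ 2 * (deriv b y) ^ 2
          + 2 * a y * deriv b y * deriv a y = 0) := by
  obtain ⟨c1, hc1def⟩ : ∃ c : ℝ, c = lam ^ ((4:ℝ)/5) * (6:ℝ) ^ ((1:ℝ)/5) := ⟨_, rfl⟩
  obtain ⟨c2, hc2def⟩ : ∃ c : ℝ, c = (3 * lam ^ 2 / 2) ^ ((1:ℝ)/3) := ⟨_, rfl⟩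
  obtain ⟨c3, hc3def⟩ : ∃ c : ℝ, c = (3 / (16 * lam)) ^ ((2:ℝ)/3) := ⟨_, rfl⟩
  have ha' : ∀ y : ℝ, a y = if y ≤ yc then c1 * y ^ ((2:ℝ)/5) else c2 * y ^ ((2:ℝ)/3) := by
    intro y; rw [ha, hc1def, hc2def]
  have hb' : ∀ y : ℝ, b y = if y ≤ yc then 0 else c3 * y ^ ((4:ℝ)/3) - 1 := by
    intro y; rw [hb, hc3def]
  clear ha hb
  have hyc_pos : 0 < yc := by
    rw [hyc]; positivity
  have hyc2 : yc ^ 2 = 16 * lam / 3 := by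
    rw [hyc, mul_pow, Real.sq_sqrt (by positivity : (0:ℝ) ≤ lam / 3)]; ring
  have hc1_pos : 0 < c1 := by
    rw [hc1def]; positivity
  have hc2_pos : 0 < c2 := by
    rw [hc2def]; positivity
  have hc3_pos : 0 < c3 := by
    rw [hc3def]; positivity
  -- algebraic facts about the constants
  have hc1_5 : c1 ^ 5 = 6 * lam ^ 4 := by
    rw [hc1def, mul_pow, aux_pow' lam hlam.le ((4:ℝ)/5) 5 4 (by push_cast; norm_num),
        aux_pow' (6:ℝ) (by norm_num) ((1:ℝ)/5) 5 1 (by push_cast; norm_num), pow_one]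
    ring
  have hc2_3 : c2 ^ 3 = 3 * lam ^ 2 / 2 := by
    rw [hc2def, aux_pow' _ (by positivity) ((1:ℝ)/3) 3 1 (by push_cast; norm_num), pow_one]
  have hc3_3 : c3 ^ 3 = 9 / (256 * lam ^ 2) := by
    rw [hc3def, aux_pow' _ (by positivity) ((2:ℝ)/3) 3 2 (by push_cast; norm_num)]
    rw [div_pow]
    congr 1
    · norm_num
    · ring
  have hK1 : c2 * c3 = 3 / 8 := by
    have h3 : (c2 * c3) ^ 3 = ((3:ℝ) / 8) ^ 3 := by
      rw [mul_pow, hc2_3, hc3_3]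
      field_simp
      ring
    exact (pow_left_strictMonoOn₀ (n := 3) (by norm_num)).injOn
      (by positivity : (0:ℝ) ≤ c2 * c3) (by norm_num : (0:ℝ) ≤ (3:ℝ)/8) h3
  -- matching at yc
  have hyc6 : (yc ^ ((2:ℝ)/5)) ^ 15 = yc ^ 6 :=
    aux_pow' yc hyc_pos.le _ 15 6 (by push_cast; norm_num)
  have hyc10 : (yc ^ ((2:ℝ)/3)) ^ 15 = yc ^ 10 :=
    aux_pow' yc hyc_pos.le _ 15 10 (by push_cast; norm_num)
  have hmatch_a : c1 * yc ^ ((2:ℝ)/5) = c2 * yc ^ ((2:ℝ)/3) := by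
    have e1 : c1 ^ 15 = (6 * lam ^ 4) ^ 3 := by
      rw [show (15:ℕ) = 5 * 3 by norm_num, pow_mul, hc1_5]
    have e2 : c2 ^ 15 = (3 * lam ^ 2 / 2) ^ 5 := by
      rw [show (15:ℕ) = 3 * 5 by norm_num, pow_mul, hc2_3]
    have e3 : yc ^ 6 = (16 * lam / 3) ^ 3 := by
      rw [show (6:ℕ) = 2 * 3 by norm_num, pow_mul, hyc2]
    have e4 : yc ^ 10 = (16 * lam / 3) ^ 5 := by
      rw [show (10:ℕ) = 2 * 5 by norm_num, pow_mul, hyc2]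
    have h15 : (c1 * yc ^ ((2:ℝ)/5)) ^ 15 = (c2 * yc ^ ((2:ℝ)/3)) ^ 15 := by
      rw [mul_pow, mul_pow, hyc6, hyc10, e1, e2, e3, e4]
      field_simp
      ring
    exact (pow_left_strictMonoOn₀ (n := 15) (by norm_num)).injOn
      (by positivity : (0:ℝ) ≤ c1 * yc ^ ((2:ℝ)/5))
      (by positivity : (0:ℝ) ≤ c2 * yc ^ ((2:ℝ)/3)) h15
  have hmatch_b : c3 * yc ^ ((4:ℝ)/3) = 1 := by
    have h3 : (c3 * yc ^ ((4:ℝ)/3)) ^ 3 = (1:ℝ) ^ 3 := by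
      rw [mul_pow, hc3_3, aux_pow' yc hyc_pos.le _ 3 4 (by push_cast; norm_num),
          show yc ^ 4 = (yc ^ 2) ^ 2 by ring, hyc2]
      field_simp
      ring
    exact (pow_left_strictMonoOn₀ (n := 3) (by norm_num)).injOn
      (by positivity : (0:ℝ) ≤ c3 * yc ^ ((4:ℝ)/3)) (by norm_num : (0:ℝ) ≤ (1:ℝ)) h3
  -- the pieces
  set F1 : ℝ → ℝ := fun t => c1 * t ^ ((2:ℝ)/5) with hF1
  set F2 : ℝ → ℝ := fun t => c2 * t ^ ((2:ℝ)/3) with hF2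
  set G2 : ℝ → ℝ := fun t => c3 * t ^ ((4:ℝ)/3) - 1 with hG2
  have haF1 : ∀ t, t ≤ yc → a t = F1 t := fun t ht => by rw [ha', if_pos ht]
  have haF2 : ∀ t, yc < t → a t = F2 t := fun t ht => by
    rw [ha', if_neg (not_le.mpr ht)]
  have hbG1 : ∀ t, t ≤ yc → b t = 0 := fun t ht => by rw [hb', if_pos ht]
  have hbG2 : ∀ t, yc < t → b t = G2 t := fun t ht => by
    rw [hb', if_neg (not_le.mpr ht)]
  -- eventual equalities
  have heaF1 : ∀ y : ℝ, y < yc → a =ᶠ[nhds y] F1 := fun y hlt =>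
    Filter.eventually_of_mem (Iio_mem_nhds hlt) (fun t ht => haF1 t (le_of_lt ht))
  have heaF2 : ∀ y : ℝ, yc < y → a =ᶠ[nhds y] F2 := fun y hlt =>
    Filter.eventually_of_mem (Ioi_mem_nhds hlt) (fun t ht => haF2 t ht)
  have hebG1 : ∀ y : ℝ, y < yc → b =ᶠ[nhds y] (fun _ => (0:ℝ)) := fun y hlt =>
    Filter.eventually_of_mem (Iio_mem_nhds hlt) (fun t ht => hbG1 t (le_of_lt ht))
  have hebG2 : ∀ y : ℝ, yc < y → b =ᶠ[nhds y] G2 := fun y hlt =>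
    Filter.eventually_of_mem (Ioi_mem_nhds hlt) (fun t ht => hbG2 t ht)
  -- continuity of pieces
  have hcF1 : ∀ y : ℝ, y ≠ 0 → ContinuousAt F1 y := fun y hy => by
    exact continuousAt_const.mul (Real.continuousAt_rpow_const y _ (Or.inl hy))
  have hcF2 : ∀ y : ℝ, y ≠ 0 → ContinuousAt F2 y := fun y hy => by
    exact continuousAt_const.mul (Real.continuousAt_rpow_const y _ (Or.inl hy))
  have hcG2 : ∀ y : ℝ, y ≠ 0 → ContinuousAt G2 y := fun y hy => by
    exact (continuousAt_const.mul (Real.continuousAt_rpow_const y _ (Or.inl hy))).sub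
      continuousAt_const
  -- derivatives of pieces
  have hdF1 : ∀ y : ℝ, y ≠ 0 → HasDerivAt F1 (c1 * ((2/5) * y ^ ((2:ℝ)/5 - 1))) y :=
    fun y hy => by
      exact (Real.hasDerivAt_rpow_const (p := (2:ℝ)/5) (Or.inl hy)).const_mul c1
  have hdF2 : ∀ y : ℝ, y ≠ 0 → HasDerivAt F2 (c2 * ((2/3) * y ^ ((2:ℝ)/3 - 1))) y :=
    fun y hy => by
      exact (Real.hasDerivAt_rpow_const (p := (2:ℝ)/3) (Or.inl hy)).const_mul c2
  have hdG2 : ∀ y : ℝ, y ≠ 0 → HasDerivAt G2 (c3 * ((4/3) * y ^ ((4:ℝ)/3 - 1))) y :=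
    fun y hy => by
      exact ((Real.hasDerivAt_rpow_const (p := (4:ℝ)/3) (Or.inl hy)).const_mul c3).sub_const 1
  -- deriv formulas
  have hda_lt : ∀ y : ℝ, y ≠ 0 → y < yc →
      deriv a y = c1 * ((2/5) * y ^ ((2:ℝ)/5 - 1)) := fun y hy hlt =>
    (((hdF1 y hy)).congr_of_eventuallyEq (heaF1 y hlt)).deriv
  have hda_gt : ∀ y : ℝ, y ≠ 0 → yc < y →
      deriv a y = c2 * ((2/3) * y ^ ((2:ℝ)/3 - 1)) := fun y hy hlt =>
    (((hdF2 y hy)).congr_of_eventuallyEq (heaF2 y hlt)).deriv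
  have hdb_lt : ∀ y : ℝ, y < yc → deriv b y = 0 := fun y hlt =>
    ((hasDerivAt_const y (0:ℝ)).congr_of_eventuallyEq (hebG1 y hlt)).deriv
  have hdb_gt : ∀ y : ℝ, y ≠ 0 → yc < y →
      deriv b y = c3 * ((4/3) * y ^ ((4:ℝ)/3 - 1)) := fun y hy hlt =>
    (((hdG2 y hy)).congr_of_eventuallyEq (hebG2 y hlt)).deriv
  refine ⟨?_, ?_, ?_, ?_, ?_⟩
  · -- ContinuousOn a
    intro y hy
    have hy0 : y ≠ 0 := ne_of_gt hy
    rcases lt_trichotomy y yc with h | h | h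
    · exact (((hcF1 y hy0).congr (heaF1 y h).symm)).continuousWithinAt
    · subst h
      have h1 : ContinuousWithinAt a (Iic y) y :=
        ((hcF1 y hy0).continuousWithinAt).congr (fun t ht => haF1 t ht) (haF1 y le_rfl)
      have h2 : ContinuousWithinAt a (Ici y) y := by
        refine ((hcF2 y hy0).continuousWithinAt).congr (fun t ht => ?_) ?_
        · rcases eq_or_lt_of_le (Set.mem_Ici.mp ht) with h' | h'
          · rw [← h', haF1 y le_rfl]; exact hmatch_a
          · exact haF2 t h'
        · rw [haF1 y le_rfl]; exact hmatch_a
      have := h1.union h2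
      rw [Iic_union_Ici, continuousWithinAt_univ] at this
      exact this.continuousWithinAt
    · exact (((hcF2 y hy0).congr (heaF2 y h).symm)).continuousWithinAt
  · -- ContinuousOn b
    intro y hy
    have hy0 : y ≠ 0 := ne_of_gt hy
    rcases lt_trichotomy y yc with h | h | h
    · exact ((continuousAt_const.congr (hebG1 y h).symm)).continuousWithinAt
    · subst h
      have hbyc : b y = 0 := hbG1 y le_rfl
      have hG2yc : G2 y = 0 := by
        simp only [hG2]; linarith [hmatch_b]
      have h1 : ContinuousWithinAt b (Iic y) y :=
        (continuousWithinAt_const (b := (0:ℝ))).congr (fun t ht => hbG1 t ht) hbyc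
      have h2 : ContinuousWithinAt b (Ici y) y := by
        refine ((hcG2 y hy0).continuousWithinAt).congr (fun t ht => ?_) ?_
        · rcases eq_or_lt_of_le (Set.mem_Ici.mp ht) with h' | h'
          · rw [← h', hbyc, hG2yc]
          · exact hbG2 t h'
        · rw [hbyc, hG2yc]
      have := h1.union h2
      rw [Iic_union_Ici, continuousWithinAt_univ] at this
      exact this.continuousWithinAt
    · exact (((hcG2 y hy0).congr (hebG2 y h).symm)).continuousWithinAt
  · -- ContDiffOn a
    intro y hy
    obtain ⟨hy0, hyne⟩ := hy
    have hy0' : y ≠ 0 := ne_of_gt hy0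
    rcases lt_or_gt_of_ne (hyne : y ≠ yc) with h | h
    · have hcd : ContDiffAt ℝ 1 (fun x : ℝ => c1 * x ^ ((2:ℝ)/5)) y :=
        contDiffAt_const.mul (Real.contDiffAt_rpow_const_of_ne hy0')
      exact (hcd.congr_of_eventuallyEq (heaF1 y h)).contDiffWithinAt
    · have hcd : ContDiffAt ℝ 1 (fun x : ℝ => c2 * x ^ ((2:ℝ)/3)) y :=
        contDiffAt_const.mul (Real.contDiffAt_rpow_const_of_ne hy0')
      exact (hcd.congr_of_eventuallyEq (heaF2 y h)).contDiffWithinAt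
  · -- ContDiffOn b
    intro y hy
    obtain ⟨hy0, hyne⟩ := hy
    have hy0' : y ≠ 0 := ne_of_gt hy0
    rcases lt_or_gt_of_ne (hyne : y ≠ yc) with h | h
    · exact (contDiffAt_const.congr_of_eventuallyEq (hebG1 y h)).contDiffWithinAt
    · have hcd : ContDiffAt ℝ 1 (fun x : ℝ => c3 * x ^ ((4:ℝ)/3) - 1) y :=
        (contDiffAt_const.mul (Real.contDiffAt_rpow_const_of_ne hy0')).sub contDiffAt_const
      exact (hcd.congr_of_eventuallyEq (hebG2 y h)).contDiffWithinAt
  · -- the equations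
    intro y hy
    obtain ⟨hy0, hyne⟩ := hy
    have hy0 : (0:ℝ) < y := hy0
    have hy0' : y ≠ 0 := ne_of_gt hy0
    rcases lt_or_gt_of_ne (hyne : y ≠ yc) with h | h
    · -- y < yc
      have hby : b y = 0 := hbG1 y (le_of_lt h)
      have hay : a y = c1 * y ^ ((2:ℝ)/5) := haF1 y (le_of_lt h)
      have hdb : deriv b y = 0 := hdb_lt y h
      have hda : deriv a y = c1 * ((2/5) * y ^ ((2:ℝ)/5 - 1)) := hda_lt y hy0' h
      constructor
      · rw [hby, hdb, if_pos h]; ring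
      · rw [hay, hda, hdb]
        have key : y * y ^ ((2:ℝ)/5 - 1) = y ^ ((2:ℝ)/5) := by
          have := Real.rpow_add hy0 1 ((2:ℝ)/5 - 1)
          rw [Real.rpow_one] at this
          rw [← this]; norm_num
        linear_combination (-(1:ℝ)/2) * c1 * key
    · -- y > yc
      have hby : b y = c3 * y ^ ((4:ℝ)/3) - 1 := hbG2 y h
      have hay : a y = c2 * y ^ ((2:ℝ)/3) := haF2 y h
      have hdb : deriv b y = c3 * ((4/3) * y ^ ((4:ℝ)/3 - 1)) := hdb_gt y hy0' h
      have hda : deriv a y = c2 * ((2/3) * y ^ ((2:ℝ)/3 - 1)) := hda_gt y hy0' h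
      obtain ⟨t, htdef⟩ : ∃ t : ℝ, t = y ^ ((1:ℝ)/3) := ⟨_, rfl⟩
      have ht_pos : 0 < t := htdef ▸ Real.rpow_pos_of_pos hy0 _
      have ht3 : t ^ 3 = y := by
        rw [htdef, aux_pow' y hy0.le _ 3 1 (by push_cast; norm_num), pow_one]
      have h23 : y ^ ((2:ℝ)/3) = t ^ 2 := by
        rw [htdef, aux_pow y hy0.le]; norm_num
      have h43 : y ^ ((4:ℝ)/3) = t ^ 4 := by
        rw [htdef, aux_pow y hy0.le]; norm_num
      have h13 : y ^ ((4:ℝ)/3 - 1) = t := by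
        rw [htdef]; norm_num
      have hm13 : y ^ ((2:ℝ)/3 - 1) = t⁻¹ := by
        rw [htdef, ← Real.rpow_neg_one (y ^ ((1:ℝ)/3)), ← Real.rpow_mul hy0.le]
        norm_num
      have hl2 : lam ^ 2 = 2 / 3 * c2 ^ 3 := by rw [hc2_3]; ring
      have hc3v : c3 = 3 / (8 * c2) := by
        field_simp
        linear_combination 8 * hK1
      constructor
      · rw [hby, hdb, if_neg (not_lt.mpr (le_of_lt h)), hay, h43, h13, h23, ← ht3]
        linear_combination (-(16:ℝ)/9) * c3 * t ^ 4 * hK1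
      · rw [hay, hda, hdb, h23, h13, hm13, ← ht3, hl2, hc3v]
        field_simp
        ring
end

section
/- For y < y_c, the shifted polynomial is P(X) = (K₋⁵/(25λ⁴))·X·(X−1)², where K₋ = λ^{4/5}·6^{1/5}; in particular P does not depend on y and P(0) = 0. -/
theorem stmt_6 (lam : ℝ) (hlam : 0 < lam)
    (yc Km : ℝ) (hyc : yc = 4 * Real.sqrt (lam / 3))
    (hKm : Km = lam ^ ((4:ℝ)/5) * (6:ℝ) ^ ((1:ℝ)/5))
    (a b : ℝ → ℝ)
    (ha : ∀ y : ℝ, a y = Km * y ^ ((2:ℝ)/5))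
    (hb : ∀ y : ℝ, b y = 0)
    (g : ℝ → ℝ → ℝ)
    (hg : ∀ y η : ℝ, g y η =
      - b y - (η - a y) ^ 2 / (4 * lam ^ 2)
        + (5/4) * y * (deriv b y - deriv a y * (η - a y) / (2 * lam ^ 2))
        + (1/2) * η * (η - a y) / (2 * lam ^ 2)
        - η * (deriv b y - deriv a y * (η - a y) / (2 * lam ^ 2)) ^ 2
        + 1) :
    ∀ y : ℝ, 0 < y → y < yc → ∀ η : ℝ,
      g y η = 1 - (Km ^ 5 / (25 * lam ^ 4)) * (η / a y) * (η / a y - 1) ^ 2 := by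
  intro y hy _ η
  have hKm0 : 0 < Km := by
    rw [hKm]
    positivity
  have hyp : (0:ℝ) < y ^ ((2:ℝ)/5) := Real.rpow_pos_of_pos hy _
  have ha0 : a y ≠ 0 := by rw [ha]; positivity
  have hderb : deriv b y = 0 := by
    have hbf : b = fun _ => (0:ℝ) := funext hb
    simp [hbf]
  have hdera : deriv a y = (2/5) * a y / y := by
    have h1 : HasDerivAt (fun x : ℝ => x ^ ((2:ℝ)/5)) ((2/5) * y ^ ((2:ℝ)/5 - 1)) y :=
      Real.hasDerivAt_rpow_const (Or.inl (ne_of_gt hy))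
    have h2 : HasDerivAt a (Km * ((2/5) * y ^ ((2:ℝ)/5 - 1))) y := by
      have h3 := h1.const_mul Km
      have haf : a = fun x : ℝ => Km * x ^ ((2:ℝ)/5) := funext ha
      rw [haf]
      exact h3
    rw [h2.deriv, ha, Real.rpow_sub hy, Real.rpow_one]
    field_simp
  have hKm5 : Km ^ 5 = (a y) ^ 5 / y ^ 2 := by
    have h5 : (a y) ^ 5 = Km ^ 5 * y ^ 2 := by
      rw [ha, mul_pow, ← Real.rpow_natCast (y ^ ((2:ℝ)/5)) 5, ← Real.rpow_mul hy.le]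
      norm_num
    rw [h5]
    field_simp
  rw [hg, hderb, hdera, hb, hKm5]
  have hl : lam ≠ 0 := ne_of_gt hlam
  have hy0 : y ≠ 0 := ne_of_gt hy
  field_simp
  ring
end

section
/- Let T : I → ℝ be twice continuously differentiable on an interval I containing a with T(a) = 0 and T′(a) = 0. Then for every η ∈ I, the series u(η) = Σ_{k=0}^∞ 2^k·T(a + (η−a)·2^{−k}) converges absolutely, and satisfies the bound |u(η)| ≤ ‖T″‖_{∞,[a,η]}·(η−a)². -/
set_option maxHeartbeats 1000000

theorem stmt_10 (I : Set ℝ) (hI : Convex ℝ I) (a : ℝ) (ha : a ∈ I)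
    (T T' T'' : ℝ → ℝ)
    (hT' : ∀ x ∈ I, HasDerivWithinAt T (T' x) I x)
    (hT'' : ∀ x ∈ I, HasDerivWithinAt T' (T'' x) I x)
    (hT''c : ContinuousOn T'' I)
    (hTa : T a = 0) (hT'a : T' a = 0) :
    ∀ η ∈ I,
      Summable (fun k : ℕ => |(2:ℝ) ^ k * T (a + (η - a) * (2:ℝ) ^ (-(k:ℤ)))|) ∧
      |∑' k : ℕ, (2:ℝ) ^ k * T (a + (η - a) * (2:ℝ) ^ (-(k:ℤ)))|
        ≤ sSup ((fun x => |T'' x|) '' Set.uIcc a η) * (η - a) ^ 2 := by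
  intro η hη
  set M : ℝ := sSup ((fun x => |T'' x|) '' Set.uIcc a η) with hMdef
  have hsub : Set.uIcc a η ⊆ I := hI.ordConnected.uIcc_subset ha hη
  have bdd : BddAbove ((fun x => |T'' x|) '' Set.uIcc a η) :=
    (isCompact_uIcc.image_of_continuousOn ((hT''c.mono hsub).abs)).bddAbove
  have hM : ∀ x ∈ Set.uIcc a η, |T'' x| ≤ M := fun x hx => le_csSup bdd ⟨x, hx, rfl⟩
  have hM0 : 0 ≤ M := (abs_nonneg _).trans (hM a Set.left_mem_uIcc)
  -- bound on T'
  have hT'bd : ∀ y ∈ Set.uIcc a η, |T' y| ≤ M * |y - a| := by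
    intro y hy
    have := (convex_uIcc a η).norm_image_sub_le_of_norm_hasDerivWithin_le
      (f := T') (f' := T'') (fun x hx => (hT'' x (hsub hx)).mono hsub)
      (fun x hx => by simpa using hM x hx) Set.left_mem_uIcc hy
    simpa [hT'a, Real.norm_eq_abs] using this
  -- membership of segment points
  have hmem : ∀ y ∈ Set.uIcc a η, ∀ t ∈ Set.Icc (0:ℝ) 1, a + t * (y - a) ∈ Set.uIcc a η := by
    intro y hy t ht
    have : a + t * (y - a) = (1 - t) • a + t • y := by simp [smul_eq_mul]; ring
    rw [this]
    exact (convex_uIcc a η) Set.left_mem_uIcc hy (by linarith [ht.2]) ht.1 (by ring)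
  -- key second-order bound
  have key : ∀ y ∈ Set.uIcc a η, |T y| ≤ M * (y - a) ^ 2 / 2 := by
    intro y hy
    set φ : ℝ → ℝ := fun t => a + t * (y - a) with hφ
    have hφd : ∀ t : ℝ, HasDerivAt φ (y - a) t := by
      intro t
      exact (((hasDerivAt_id t).mul_const (y - a)).const_add a).congr_deriv (one_mul _)
    have hgd : ∀ t ∈ Set.Icc (0:ℝ) 1,
        HasDerivWithinAt (T ∘ φ) (T' (φ t) * (y - a)) (Set.Icc 0 1) t := by
      intro t ht
      exact HasDerivWithinAt.comp t ((hT' (φ t) (hsub (hmem y hy t ht))).mono hsub)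
        ((hφd t).hasDerivWithinAt) (fun s hs => hmem y hy s hs)
    have main := image_norm_le_of_norm_deriv_right_le_deriv_boundary
      (f := T ∘ φ) (f' := fun t => T' (φ t) * (y - a)) (a := 0) (b := 1)
      (B := fun t => M * (y - a) ^ 2 * t ^ 2 / 2) (B' := fun t => M * (y - a) ^ 2 * t)
      (fun t ht => (hgd t ht).continuousWithinAt)
      (fun t ht => (hgd t (Set.mem_Icc_of_Ico ht)).mono_of_mem_nhdsWithin
        (Icc_mem_nhdsGE_of_mem ht))
      (by simp [Function.comp, hφ, hTa])
      (fun t => by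
        have : HasDerivAt (fun s : ℝ => M * (y - a) ^ 2 * s ^ 2 / 2)
            (M * (y - a) ^ 2 * (2 * t) / 2) t := by
          exact ((hasDerivAt_pow 2 t).const_mul (M * (y - a) ^ 2)).div_const 2 |>.congr_deriv
            (by ring)
        simpa using this.congr_deriv (by ring))
      (fun t ht => by
        have h1 : |T' (φ t)| ≤ M * |φ t - a| := hT'bd (φ t) (hmem y hy t (Set.mem_Icc_of_Ico ht))
        have h2 : |φ t - a| = t * |y - a| := by
          simp only [hφ, add_sub_cancel_left, abs_mul, abs_of_nonneg ht.1]
        rw [Real.norm_eq_abs, abs_mul]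
        calc |T' (φ t)| * |y - a| ≤ M * (t * |y - a|) * |y - a| := by
              rw [← h2]; exact mul_le_mul_of_nonneg_right h1 (abs_nonneg _)
          _ = M * (y - a) ^ 2 * t := by
              have hsq : |y - a| * |y - a| = (y - a) ^ 2 := by
                rw [← abs_mul, abs_mul_self, sq]
              linear_combination (M * t) * hsq)
    have := main (Set.right_mem_Icc.2 zero_le_one)
    simpa [Function.comp, hφ, Real.norm_eq_abs] using this
  -- the points a + (η-a) * 2^{-k}
  set h := η - a with hh
  have hpt : ∀ k : ℕ, a + h * (2:ℝ) ^ (-(k:ℤ)) ∈ Set.uIcc a η := by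
    intro k
    have h1 : (0:ℝ) < (2:ℝ) ^ (-(k:ℤ)) := zpow_pos (by norm_num) _
    have h2 : (2:ℝ) ^ (-(k:ℤ)) ≤ 1 := by
      apply zpow_le_one_of_nonpos₀ (by norm_num) (by simp)
    have := hmem η Set.right_mem_uIcc _ ⟨h1.le, h2⟩
    simpa [mul_comm] using this
  -- termwise bound
  have hterm : ∀ k : ℕ, |(2:ℝ) ^ k * T (a + h * (2:ℝ) ^ (-(k:ℤ)))|
      ≤ M * h ^ 2 * (1 / 2) ^ (k + 1) := by
    intro k
    have hk := key _ (hpt k)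
    have h2k : ((2:ℝ) ^ (-(k:ℤ)) : ℝ) = ((2:ℝ) ^ k)⁻¹ := by
      rw [zpow_neg]; norm_cast
    rw [abs_mul, abs_pow, abs_two]
    have hpos : (0:ℝ) ≤ (2:ℝ) ^ k := by positivity
    calc (2:ℝ) ^ k * |T (a + h * (2:ℝ) ^ (-(k:ℤ)))|
        ≤ (2:ℝ) ^ k * (M * (a + h * (2:ℝ) ^ (-(k:ℤ)) - a) ^ 2 / 2) :=
          mul_le_mul_of_nonneg_left hk hpos
      _ = M * h ^ 2 * (1 / 2) ^ (k + 1) := by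
          rw [add_sub_cancel_left, h2k, one_div, inv_pow]
          have hne : ((2:ℝ)) ^ k ≠ 0 := by positivity
          have hne' : ((2:ℝ)) ^ (k + 1) ≠ 0 := by positivity
          field_simp
          ring
  have hsumb : Summable (fun k : ℕ => M * h ^ 2 * (1 / 2) ^ (k + 1)) := by
    have heq : (fun k : ℕ => M * h ^ 2 * (1 / 2 : ℝ) ^ (k + 1))
        = fun k : ℕ => (M * h ^ 2 * (1 / 2)) * (1 / 2 : ℝ) ^ k := by
      funext k; rw [pow_succ]; ring
    rw [heq]
    exact (summable_geometric_of_lt_one (by norm_num) (by norm_num)).mul_left _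
  have hsum : Summable (fun k : ℕ => |(2:ℝ) ^ k * T (a + h * (2:ℝ) ^ (-(k:ℤ)))|) :=
    Summable.of_nonneg_of_le (fun k => abs_nonneg _) hterm hsumb
  refine ⟨hsum, ?_⟩
  have hsum' : Summable (fun k : ℕ => ‖(2:ℝ) ^ k * T (a + h * (2:ℝ) ^ (-(k:ℤ)))‖) := by
    simpa only [Real.norm_eq_abs] using hsum
  have habs : |∑' k : ℕ, (2:ℝ) ^ k * T (a + h * (2:ℝ) ^ (-(k:ℤ)))|
      ≤ ∑' k : ℕ, |(2:ℝ) ^ k * T (a + h * (2:ℝ) ^ (-(k:ℤ)))| := by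
    have := norm_tsum_le_tsum_norm
      (f := fun k : ℕ => (2:ℝ) ^ k * T (a + h * (2:ℝ) ^ (-(k:ℤ)))) hsum'
    simpa only [Real.norm_eq_abs] using this
  refine habs.trans ?_
  have hle := Summable.tsum_le_tsum hterm hsum hsumb
  refine hle.trans ?_
  have : ∑' k : ℕ, M * h ^ 2 * (1 / 2) ^ (k + 1) = M * h ^ 2 := by
    rw [tsum_mul_left]
    have : ∑' k : ℕ, ((1:ℝ) / 2) ^ (k + 1) = 1 := by
      have := tsum_geometric_of_lt_one (r := (1:ℝ)/2) (by norm_num) (by norm_num)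
      calc ∑' k : ℕ, ((1:ℝ) / 2) ^ (k + 1) = ∑' k : ℕ, (1/2) * ((1:ℝ)/2) ^ k := by
            congr 1; ext k; rw [pow_succ]; ring
        _ = (1/2) * ∑' k : ℕ, ((1:ℝ)/2) ^ k := tsum_mul_left
        _ = 1 := by rw [this]; norm_num
    rw [this, mul_one]
  rw [this, hh]
end

section
/- Uniform bound behind the front: with F(x) = log(1 − P(x)) for P(X) = γX(X−1)², fix a closed interval J₀ centered at 1 on which P < 1, and let J ⊆ J₀ be an open interval centered at 1 of length |J|. For any a > 0 and any η ∈ a·J, defining T(η) = F(η/a), the series Σ_{k≥0} |2^k·T(a + (η−a)2^{−k})| converges and is bounded by |J|²·‖F″‖_{∞,J₀}, uniformly in a and η. -/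
theorem stmt_13 (γ : ℝ) (hγ : 0 < γ)
    (P F : ℝ → ℝ)
    (hP : ∀ x : ℝ, P x = γ * x * (x - 1) ^ 2)
    (hF : ∀ x : ℝ, F x = Real.log (1 - P x))
    (r₀ r : ℝ) (hr₀ : 0 < r₀) (hr : 0 < r) (hrr₀ : r ≤ r₀)
    (hP1 : ∀ x ∈ Set.Icc (1 - r₀) (1 + r₀), P x < 1)
    (a : ℝ) (haa : 0 < a) (η : ℝ) (hη : η / a ∈ Set.Ioo (1 - r) (1 + r))
    (T : ℝ → ℝ) (hT : ∀ x : ℝ, T x = F (x / a)) :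
    Summable (fun k : ℕ => |(2:ℝ) ^ k * T (a + (η - a) * (2:ℝ) ^ (-(k:ℤ)))|) ∧
    (∑' k : ℕ, |(2:ℝ) ^ k * T (a + (η - a) * (2:ℝ) ^ (-(k:ℤ)))|)
      ≤ (2 * r) ^ 2 * sSup ((fun x => |deriv (deriv F) x|) '' Set.Icc (1 - r₀) (1 + r₀)) := by
  have hF0 : F = fun y : ℝ => Real.log (1 - γ * y * (y - 1) ^ 2) := by
    funext y; rw [hF, hP]
  set Q : ℝ → ℝ := fun y => 1 - γ * y * (y - 1) ^ 2 with hQdef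
  set q1 : ℝ → ℝ := fun y => -(γ * (y - 1) * (3 * y - 1)) with hq1def
  set q2 : ℝ → ℝ := fun y => -(γ * (6 * y - 4)) with hq2def
  have hQcont : Continuous Q := by fun_prop
  set U : Set ℝ := {x | 0 < Q x} with hUdef
  have hUopen : IsOpen U := isOpen_lt continuous_const hQcont
  have hJU : Set.Icc (1 - r₀) (1 + r₀) ⊆ U := by
    intro x hx
    have h1 := hP1 x hx
    rw [hP] at h1
    simp only [hUdef, hQdef, Set.mem_setOf_eq]
    linarith
  have hQx : ∀ x : ℝ, HasDerivAt Q (q1 x) x := by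
    intro x
    have h1 : HasDerivAt (fun y : ℝ => γ * y) (γ * 1) x := (hasDerivAt_id x).const_mul γ
    have h2 : HasDerivAt (fun y : ℝ => (y - 1) ^ 2)
        ((2 : ℕ) * (x - 1) ^ (2 - 1) * 1) x := ((hasDerivAt_id x).sub_const 1).pow 2
    have h3 := h1.mul h2
    have h4 := (hasDerivAt_const x (1:ℝ)).sub h3
    refine h4.congr_deriv ?_
    push_cast
    simp only [hq1def]
    ring
  have hq1x : ∀ x : ℝ, HasDerivAt q1 (q2 x) x := by
    intro x
    have h1 : HasDerivAt (fun y : ℝ => γ * (y - 1)) (γ * 1) x :=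
      ((hasDerivAt_id x).sub_const 1).const_mul γ
    have h2 : HasDerivAt (fun y : ℝ => 3 * y - 1) (3 * 1) x :=
      ((hasDerivAt_id x).const_mul 3).sub_const 1
    have h3 := (h1.mul h2).neg
    refine h3.congr_deriv ?_
    simp only [hq1def, hq2def]
    ring
  have hFd : ∀ x ∈ U, HasDerivAt F ((Q x)⁻¹ * q1 x) x := by
    intro x hx
    have hxne : Q x ≠ 0 := ne_of_gt hx
    have h := (Real.hasDerivAt_log hxne).comp x (hQx x)
    rw [hF0]
    exact h
  set g1 : ℝ → ℝ := fun y => q1 y / Q y with hg1def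
  set g2 : ℝ → ℝ := fun y => (q2 y * Q y - q1 y * q1 y) / Q y ^ 2 with hg2def
  have hg1d : ∀ x ∈ U, HasDerivAt g1 (g2 x) x := fun x hx =>
    (hq1x x).div (hQx x) (ne_of_gt hx)
  have hderiv1 : Set.EqOn (deriv F) g1 U := by
    intro x hx
    rw [(hFd x hx).deriv, hg1def]
    simp [div_eq_inv_mul]
  have hFd2 : ∀ x ∈ U, HasDerivAt (deriv F) (g2 x) x := by
    intro x hx
    refine (hg1d x hx).congr_of_eventuallyEq ?_
    filter_upwards [hUopen.mem_nhds hx] with y hy using hderiv1 hy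
  have hderiv2 : Set.EqOn (deriv (deriv F)) g2 U := fun x hx => (hFd2 x hx).deriv
  have hg2cont : ContinuousOn g2 (Set.Icc (1 - r₀) (1 + r₀)) := by
    apply ContinuousOn.div
    · fun_prop
    · fun_prop
    · intro x hx
      exact pow_ne_zero 2 (ne_of_gt (hJU hx))
  set M := sSup ((fun x => |deriv (deriv F) x|) '' Set.Icc (1 - r₀) (1 + r₀)) with hMdef
  have himg : (fun x => |deriv (deriv F) x|) '' Set.Icc (1 - r₀) (1 + r₀)
      = (fun x => |g2 x|) '' Set.Icc (1 - r₀) (1 + r₀) :=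
    Set.image_congr fun x hx => by rw [hderiv2 (hJU hx)]
  have hbdd : BddAbove ((fun x => |deriv (deriv F) x|) '' Set.Icc (1 - r₀) (1 + r₀)) := by
    rw [himg]
    exact (isCompact_Icc.image_of_continuousOn hg2cont.abs).bddAbove
  have hM1 : ∀ x ∈ Set.Icc (1 - r₀) (1 + r₀), |deriv (deriv F) x| ≤ M := fun x hx =>
    le_csSup hbdd ⟨x, hx, rfl⟩
  have h1mem : (1:ℝ) ∈ Set.Icc (1 - r₀) (1 + r₀) := by
    constructor <;> linarith
  have hM0 : 0 ≤ M := le_trans (abs_nonneg _) (hM1 1 h1mem)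
  have hLip : ∀ x ∈ Set.Icc (1 - r₀) (1 + r₀), |deriv F x - deriv F 1| ≤ M * |x - 1| := by
    intro x hx
    have h := Convex.norm_image_sub_le_of_norm_hasDerivWithin_le
      (f := deriv F) (f' := deriv (deriv F)) (C := M) (s := Set.Icc (1 - r₀) (1 + r₀))
      (fun y hy => by
        rw [hderiv2 (hJU hy)]
        exact (hFd2 y (hJU hy)).hasDerivWithinAt)
      (fun y hy => by rw [Real.norm_eq_abs]; exact hM1 y hy)
      (convex_Icc _ _) h1mem hx
    simpa [Real.norm_eq_abs] using h
  have hdF1 : deriv F 1 = 0 := by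
    rw [hderiv1 (hJU h1mem), hg1def]
    simp [hq1def]
  have hF1 : F 1 = 0 := by
    rw [hF0]; norm_num
  have hkey : ∀ t : ℝ, |t| ≤ r → |F (1 + t)| ≤ M * t ^ 2 := by
    intro t ht
    have htr₀ : |t| ≤ r₀ := le_trans ht hrr₀
    have hsub : Set.Icc (1 - |t|) (1 + |t|) ⊆ Set.Icc (1 - r₀) (1 + r₀) :=
      Set.Icc_subset_Icc (by linarith) (by linarith)
    have hmem1 : (1:ℝ) ∈ Set.Icc (1 - |t|) (1 + |t|) := by
      constructor <;> linarith [abs_nonneg t]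
    have hmemt : 1 + t ∈ Set.Icc (1 - |t|) (1 + |t|) := by
      constructor
      · linarith [neg_abs_le t]
      · linarith [le_abs_self t]
    have hb := Convex.norm_image_sub_le_of_norm_hasDerivWithin_le
      (f := F) (f' := deriv F) (C := M * |t|) (s := Set.Icc (1 - |t|) (1 + |t|))
      (fun y hy => by
        have h := hFd y (hJU (hsub hy))
        rw [h.deriv]
        exact h.hasDerivWithinAt)
      (fun y hy => by
        rw [Real.norm_eq_abs]
        have h1 : |deriv F y - deriv F 1| ≤ M * |y - 1| := hLip y (hsub hy)
        rw [hdF1, sub_zero] at h1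
        have h2 : |y - 1| ≤ |t| := by
          rw [abs_le]
          constructor <;> [linarith [hy.1]; linarith [hy.2]]
        calc |deriv F y| ≤ M * |y - 1| := h1
          _ ≤ M * |t| := mul_le_mul_of_nonneg_left h2 hM0)
      (convex_Icc _ _) hmem1 hmemt
    rw [hF1, sub_zero, Real.norm_eq_abs, Real.norm_eq_abs] at hb
    have : 1 + t - 1 = t := by ring
    rw [this] at hb
    calc |F (1 + t)| ≤ M * |t| * |t| := hb
      _ = M * t ^ 2 := by rw [mul_assoc, abs_mul_abs_self, ← sq]
  set δ : ℝ := η / a - 1 with hδdef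
  have hδr : |δ| ≤ r := by
    rw [abs_le]
    constructor
    · have := hη.1; rw [hδdef]; linarith
    · have := hη.2; rw [hδdef]; linarith
  have hane : a ≠ 0 := ne_of_gt haa
  have harg : ∀ k : ℕ, (a + (η - a) * (2:ℝ) ^ (-(k:ℤ))) / a = 1 + δ * (2:ℝ) ^ (-(k:ℤ)) := by
    intro k
    rw [hδdef, div_eq_iff hane]
    field_simp
  have hw : ∀ k : ℕ, (2:ℝ) ^ (-(k:ℤ)) = (1/2 : ℝ) ^ k := by
    intro k
    rw [zpow_neg, zpow_natCast, one_div, inv_pow]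
  have hterm : ∀ k : ℕ, |(2:ℝ) ^ k * T (a + (η - a) * (2:ℝ) ^ (-(k:ℤ)))|
      ≤ M * δ ^ 2 * (1/2 : ℝ) ^ k := by
    intro k
    rw [hT, harg k, hw k, abs_mul]
    have hwpos : (0:ℝ) < (1/2 : ℝ) ^ k := by positivity
    have hwle1 : ((1:ℝ)/2) ^ k ≤ 1 := pow_le_one₀ (by norm_num) (by norm_num)
    have habs : |δ * (1/2 : ℝ) ^ k| ≤ r := by
      rw [abs_mul, abs_of_pos hwpos]
      calc |δ| * (1/2:ℝ) ^ k ≤ |δ| * 1 := by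
            exact mul_le_mul_of_nonneg_left hwle1 (abs_nonneg _)
        _ = |δ| := mul_one _
        _ ≤ r := hδr
    have h1 := hkey _ habs
    have h2 : |(2:ℝ) ^ k| = (2:ℝ) ^ k := abs_of_pos (by positivity)
    rw [h2]
    calc (2:ℝ) ^ k * |F (1 + δ * (1/2:ℝ) ^ k)|
        ≤ (2:ℝ) ^ k * (M * (δ * (1/2:ℝ) ^ k) ^ 2) :=
          mul_le_mul_of_nonneg_left h1 (by positivity)
      _ = M * δ ^ 2 * ((2:ℝ) ^ k * ((1/2:ℝ) ^ k) ^ 2) := by ring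
      _ = M * δ ^ 2 * (1/2:ℝ) ^ k := by
          congr 1
          rw [sq, ← mul_assoc, ← mul_pow]
          norm_num
  have hgeo : Summable (fun k : ℕ => M * δ ^ 2 * (1/2 : ℝ) ^ k) :=
    (summable_geometric_of_lt_one (by norm_num) (by norm_num)).mul_left _
  have hsum : Summable (fun k : ℕ => |(2:ℝ) ^ k * T (a + (η - a) * (2:ℝ) ^ (-(k:ℤ)))|) :=
    Summable.of_nonneg_of_le (fun k => abs_nonneg _) hterm hgeo
  refine ⟨hsum, ?_⟩
  calc (∑' k : ℕ, |(2:ℝ) ^ k * T (a + (η - a) * (2:ℝ) ^ (-(k:ℤ)))|)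
      ≤ ∑' k : ℕ, M * δ ^ 2 * (1/2 : ℝ) ^ k := Summable.tsum_le_tsum hterm hsum hgeo
    _ = M * δ ^ 2 * 2 := by rw [tsum_mul_left, tsum_geometric_two]
    _ ≤ (2 * r) ^ 2 * M := by
        have hδ2 : δ ^ 2 ≤ r ^ 2 := by
          have := sq_abs δ
          nlinarith [abs_nonneg δ]
        nlinarith
end

section
/- Two-dimensional Gaussian limit: let u₁ : ℝ → ℝ be continuous and bounded, η̄ > 0, λ > 0, η ∈ ℝ. Then as ε → 0⁺, (1/(2πλ²))·∬_{(1−η̄/ε,∞)²} exp(−z₁z₂/(4λ²) − 3(z₁²+z₂²)/(8λ²))·exp(u₁(η) − u₁(η̄+εz₁) − u₁(η̄+εz₂)) dz₁dz₂ converges to √2·exp(u₁(η) − 2u₁(η̄)). -/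
open Real Filter MeasureTheory

lemma exp2_integrable (lam : ℝ) (hlam : 0 < lam) :
    Integrable (fun p : ℝ × ℝ =>
      Real.exp (-(p.1 * p.2) / (4 * lam ^ 2) - 3 * (p.1 ^ 2 + p.2 ^ 2) / (8 * lam ^ 2))) := by
  have hb : (0:ℝ) < 1 / (4 * lam ^ 2) := by positivity
  have h1 := integrable_exp_neg_mul_sq hb
  have hprod : Integrable (fun p : ℝ × ℝ =>
      Real.exp (-(1/(4*lam^2)) * p.1 ^ 2) * Real.exp (-(1/(4*lam^2)) * p.2 ^ 2)) := by
    rw [MeasureTheory.Measure.volume_eq_prod ℝ ℝ]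
    exact h1.mul_prod h1
  refine hprod.mono ?_ ?_
  · exact (Real.continuous_exp.comp (by continuity)).aestronglyMeasurable
  · filter_upwards with p
    rw [Real.norm_eq_abs, Real.norm_eq_abs, abs_of_pos (Real.exp_pos _),
        abs_of_pos (by positivity), ← Real.exp_add]
    apply Real.exp_le_exp.2
    have key : -(p.1 * p.2) / (4 * lam ^ 2) - 3 * (p.1 ^ 2 + p.2 ^ 2) / (8 * lam ^ 2)
        = (-(1/(4*lam^2)) * p.1 ^ 2 + -(1/(4*lam^2)) * p.2 ^ 2)
          - (p.1 + p.2) ^ 2 / (8 * lam ^ 2) := by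
      field_simp
      ring
    rw [key]
    have hd : (0:ℝ) ≤ (p.1 + p.2) ^ 2 / (8 * lam ^ 2) := by positivity
    linarith

lemma gauss2 (lam : ℝ) (hlam : 0 < lam) :
    (∫ p : ℝ × ℝ, Real.exp (-(p.1 * p.2) / (4 * lam ^ 2) - 3 * (p.1 ^ 2 + p.2 ^ 2) / (8 * lam ^ 2)))
      = 2 * Real.pi * lam ^ 2 * Real.sqrt 2 := by
  have ha : (0:ℝ) < 3 / (8 * lam ^ 2) := by positivity
  have hcc : (0:ℝ) < 1 / (3 * lam ^ 2) := by positivity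
  have hint := exp2_integrable lam hlam
  rw [MeasureTheory.Measure.volume_eq_prod ℝ ℝ] at hint
  rw [MeasureTheory.Measure.volume_eq_prod ℝ ℝ, MeasureTheory.integral_prod _ hint]
  have hinner : ∀ x : ℝ, (∫ y : ℝ, Real.exp (-(x * y) / (4 * lam ^ 2)
        - 3 * (x ^ 2 + y ^ 2) / (8 * lam ^ 2)))
      = Real.exp (-(1/(3*lam^2)) * x ^ 2) * Real.sqrt (Real.pi / (3/(8*lam^2))) := by
    intro x
    have heq : (fun y : ℝ => Real.exp (-(x * y) / (4 * lam ^ 2)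
          - 3 * (x ^ 2 + y ^ 2) / (8 * lam ^ 2)))
        = fun y => Real.exp (-(1/(3*lam^2)) * x ^ 2)
            * Real.exp (-(3/(8*lam^2)) * (y + x/3) ^ 2) := by
      funext y
      rw [← Real.exp_add]
      congr 1
      field_simp
      ring
    rw [heq, MeasureTheory.integral_const_mul]
    congr 1
    rw [MeasureTheory.integral_add_right_eq_self
        (fun y => Real.exp (-(3/(8*lam^2)) * y ^ 2)) (x/3)]
    exact integral_gaussian (3/(8*lam^2))
  simp only [hinner]
  rw [MeasureTheory.integral_mul_const, integral_gaussian (1/(3*lam^2))]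
  rw [← Real.sqrt_mul (by positivity)]
  rw [show Real.pi / (1 / (3 * lam ^ 2)) * (Real.pi / (3 / (8 * lam ^ 2)))
        = (2 * Real.pi * lam ^ 2 * Real.sqrt 2) ^ 2 by
      have h2 : Real.sqrt 2 ^ 2 = 2 := Real.sq_sqrt (by norm_num)
      field_simp
      nlinarith [Real.pi_pos, h2]]
  exact Real.sqrt_sq (by positivity)

theorem stmt_17 (u₁ : ℝ → ℝ) (hc : Continuous u₁) (hbd : ∃ M : ℝ, ∀ x : ℝ, |u₁ x| ≤ M)
    (etaBar lam η : ℝ) (hetaBar : 0 < etaBar) (hlam : 0 < lam) :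
    Tendsto (fun ε : ℝ =>
        (1 / (2 * Real.pi * lam ^ 2)) *
          ∫ p in (Set.Ioi (1 - etaBar / ε)) ×ˢ (Set.Ioi (1 - etaBar / ε)),
            Real.exp (-(p.1 * p.2) / (4 * lam ^ 2) - 3 * (p.1 ^ 2 + p.2 ^ 2) / (8 * lam ^ 2)) *
              Real.exp (u₁ η - u₁ (etaBar + ε * p.1) - u₁ (etaBar + ε * p.2)))
      (nhdsWithin 0 (Set.Ioi 0))
      (nhds (Real.sqrt 2 * Real.exp (u₁ η - 2 * u₁ etaBar))) := by
  obtain ⟨M, hM⟩ := hbd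
  set l := nhdsWithin (0:ℝ) (Set.Ioi 0) with hl
  set g : ℝ × ℝ → ℝ := fun p =>
    Real.exp (-(p.1 * p.2) / (4 * lam ^ 2) - 3 * (p.1 ^ 2 + p.2 ^ 2) / (8 * lam ^ 2)) with hg
  have hgint := exp2_integrable lam hlam
  have key : Tendsto (fun ε : ℝ =>
      ∫ p in (Set.Ioi (1 - etaBar / ε)) ×ˢ (Set.Ioi (1 - etaBar / ε)),
        g p * Real.exp (u₁ η - u₁ (etaBar + ε * p.1) - u₁ (etaBar + ε * p.2))) l
      (nhds ((2 * Real.pi * lam ^ 2 * Real.sqrt 2) * Real.exp (u₁ η - 2 * u₁ etaBar))) := by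
    have heq : ∀ ε : ℝ, (∫ p in (Set.Ioi (1 - etaBar / ε)) ×ˢ (Set.Ioi (1 - etaBar / ε)),
        g p * Real.exp (u₁ η - u₁ (etaBar + ε * p.1) - u₁ (etaBar + ε * p.2)))
        = ∫ p : ℝ × ℝ, Set.indicator ((Set.Ioi (1 - etaBar / ε)) ×ˢ (Set.Ioi (1 - etaBar / ε)))
            (fun p => g p * Real.exp (u₁ η - u₁ (etaBar + ε * p.1) - u₁ (etaBar + ε * p.2))) p := by
      intro ε
      rw [MeasureTheory.integral_indicator (measurableSet_Ioi.prod measurableSet_Ioi)]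
    simp only [heq]
    have hlimval : (∫ p : ℝ × ℝ, g p * Real.exp (u₁ η - 2 * u₁ etaBar))
        = (2 * Real.pi * lam ^ 2 * Real.sqrt 2) * Real.exp (u₁ η - 2 * u₁ etaBar) := by
      rw [MeasureTheory.integral_mul_const, gauss2 lam hlam]
    rw [← hlimval]
    apply tendsto_integral_filter_of_dominated_convergence
      (fun p => g p * Real.exp (u₁ η + 2 * M))
    · filter_upwards with ε
      refine AEStronglyMeasurable.indicator ?_ (measurableSet_Ioi.prod measurableSet_Ioi)
      refine Continuous.aestronglyMeasurable ?_
      have c1 : Continuous fun p : ℝ × ℝ =>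
          -(p.1 * p.2) / (4 * lam ^ 2) - 3 * (p.1 ^ 2 + p.2 ^ 2) / (8 * lam ^ 2) := by
        fun_prop
      have c2 : Continuous fun p : ℝ × ℝ =>
          u₁ η - u₁ (etaBar + ε * p.1) - u₁ (etaBar + ε * p.2) := by fun_prop
      exact (Real.continuous_exp.comp c1).mul (Real.continuous_exp.comp c2)
    · filter_upwards with ε
      filter_upwards with p
      refine le_trans (norm_indicator_le_norm_self _ _) ?_
      rw [Real.norm_eq_abs, abs_of_pos (by positivity)]
      have hle : Real.exp (u₁ η - u₁ (etaBar + ε * p.1) - u₁ (etaBar + ε * p.2))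
          ≤ Real.exp (u₁ η + 2 * M) := by
        apply Real.exp_le_exp.2
        have h1 := (abs_le.1 (hM (etaBar + ε * p.1))).1
        have h2 := (abs_le.1 (hM (etaBar + ε * p.2))).1
        linarith
      exact mul_le_mul_of_nonneg_left hle (Real.exp_pos _).le
    · exact hgint.mul_const _
    · filter_upwards with p
      have h1 : Tendsto (fun ε : ℝ => etaBar / ε) l atTop := by
        simpa [div_eq_mul_inv] using tendsto_inv_nhdsGT_zero.const_mul_atTop hetaBar
      have hmem : ∀ᶠ ε in l,
          p ∈ (Set.Ioi (1 - etaBar / ε)) ×ˢ (Set.Ioi (1 - etaBar / ε)) := by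
        filter_upwards [h1.eventually (eventually_gt_atTop (1 - min p.1 p.2))] with ε hε
        have h3 : 1 - etaBar / ε < min p.1 p.2 := by linarith
        exact ⟨lt_of_lt_of_le h3 (min_le_left _ _), lt_of_lt_of_le h3 (min_le_right _ _)⟩
      have hcont : Tendsto (fun ε : ℝ =>
          g p * Real.exp (u₁ η - u₁ (etaBar + ε * p.1) - u₁ (etaBar + ε * p.2))) (nhds 0)
          (nhds (g p * Real.exp (u₁ η - 2 * u₁ etaBar))) := by
        have hco : Continuous (fun ε : ℝ =>
            g p * Real.exp (u₁ η - u₁ (etaBar + ε * p.1) - u₁ (etaBar + ε * p.2))) := by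
          have : Continuous fun ε : ℝ =>
              u₁ η - u₁ (etaBar + ε * p.1) - u₁ (etaBar + ε * p.2) := by fun_prop
          exact continuous_const.mul (Real.continuous_exp.comp this)
        have h0 := hco.tendsto 0
        have hval : g p * Real.exp (u₁ η - u₁ (etaBar + 0 * p.1) - u₁ (etaBar + 0 * p.2))
            = g p * Real.exp (u₁ η - 2 * u₁ etaBar) := by
          simp only [zero_mul, add_zero]
          congr 2
          ring
        rwa [hval] at h0
      refine Tendsto.congr' ?_ (hcont.mono_left nhdsWithin_le_nhds)
      filter_upwards [hmem] with ε hε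
      exact (Set.indicator_of_mem hε
        (fun p : ℝ × ℝ => g p * Real.exp (u₁ η - u₁ (etaBar + ε * p.1) - u₁ (etaBar + ε * p.2)))).symm
  have hfin : (1 / (2 * Real.pi * lam ^ 2)) * ((2 * Real.pi * lam ^ 2 * Real.sqrt 2)
      * Real.exp (u₁ η - 2 * u₁ etaBar)) = Real.sqrt 2 * Real.exp (u₁ η - 2 * u₁ etaBar) := by
    have hne : (2 * Real.pi * lam ^ 2) ≠ 0 := by positivity
    field_simp
  rw [← hfin]
  exact key.const_mul _
end
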